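/- Let N be a symmetric real n×n matrix solving the ARE. Let z : [0, ∞) → ℝⁿ be differentiable and v : [0, ∞) → ℝᵐ be continuous with ż(t) = −Az(t) − Bv(t) for all t ≥ 0 and z(t) → 0 as t → ∞, and suppose that both t ↦ ‖z(t)‖²_Q + ‖v(t)‖²_R and t ↦ ‖v(t) + R⁻¹BᵀN z(t)‖²_R are integrable on [0, ∞). Then ½∫₀^∞ (‖z(t)‖²_Q + ‖v(t)‖²_R) dt = −½⟨N z(0), z(0)⟩ + ½∫₀^∞ ‖v(t) + R⁻¹BᵀN z(t)‖²_R dt. -/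

import Mathlib

open Matrix MeasureTheory

lemma aux_mv {n m : ℕ} (M : Matrix (Fin n) (Fin m) ℝ) (x : Fin n → ℝ) (y : Fin m → ℝ) :
    M.mulVec y ⬝ᵥ x = y ⬝ᵥ Mᵀ.mulVec x := by
  rw [dotProduct_comm, Matrix.dotProduct_mulVec, Matrix.mulVec_transpose,
    dotProduct_comm]

lemma aux_deriv {n : ℕ} (M : Matrix (Fin n) (Fin n) ℝ) (z : ℝ → Fin n → ℝ)
    (z' : Fin n → ℝ) (s : Set ℝ) (t : ℝ) (h : HasDerivWithinAt z z' s t) :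
    HasDerivWithinAt (fun τ => M.mulVec (z τ) ⬝ᵥ z τ)
      (M.mulVec z' ⬝ᵥ z t + M.mulVec (z t) ⬝ᵥ z') s t := by
  have hi : ∀ i, HasDerivWithinAt (fun τ => z τ i) (z' i) s t := hasDerivWithinAt_pi.1 h
  have key : ∀ i ∈ Finset.univ, HasDerivWithinAt (fun τ => (∑ j, M i j * z τ j) * z τ i)
      ((∑ j, M i j * z' j) * z t i + (∑ j, M i j * z t j) * z' i) s t := fun i _ =>
    (HasDerivWithinAt.fun_sum fun j _ => (hi j).const_mul (M i j)).mul (hi i)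
  have hsum := HasDerivWithinAt.fun_sum key
  convert hsum using 1
  · rfl
  · rfl
  all_goals simp [Matrix.mulVec, dotProduct, Finset.sum_add_distrib]

lemma aux_alg {n m : ℕ}
    (A : Matrix (Fin n) (Fin n) ℝ) (B : Matrix (Fin n) (Fin m) ℝ)
    (Q : Matrix (Fin n) (Fin n) ℝ)
    (R : Matrix (Fin m) (Fin m) ℝ) (hRsymm : Rᵀ = R) (hRinv : R * R⁻¹ = 1)
    (N : Matrix (Fin n) (Fin n) ℝ) (hNsymm : Nᵀ = N)
    (hARE : Aᵀ * N + N * A - N * B * R⁻¹ * Bᵀ * N = -Q)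
    (w : Fin n → ℝ) (u : Fin m → ℝ) :
    R.mulVec (u + (R⁻¹ * Bᵀ * N).mulVec w) ⬝ᵥ (u + (R⁻¹ * Bᵀ * N).mulVec w)
      = Q.mulVec w ⬝ᵥ w + R.mulVec u ⬝ᵥ u
        + 2 * (N.mulVec w ⬝ᵥ (A.mulVec w + B.mulVec u)) := by
  have hQeq : Q = N * B * R⁻¹ * Bᵀ * N - Aᵀ * N - N * A := by
    rw [← neg_neg Q, ← hARE]; abel
  have hRK : R * (R⁻¹ * Bᵀ * N) = Bᵀ * N := by
    rw [← Matrix.mul_assoc, ← Matrix.mul_assoc, hRinv, Matrix.one_mul]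
  have h1 : R.mulVec ((R⁻¹ * Bᵀ * N).mulVec w) = (Bᵀ * N).mulVec w := by
    rw [Matrix.mulVec_mulVec, hRK]
  have h2 : R.mulVec u ⬝ᵥ (R⁻¹ * Bᵀ * N).mulVec w = N.mulVec w ⬝ᵥ B.mulVec u := by
    rw [aux_mv, hRsymm, h1, ← Matrix.mulVec_mulVec, dotProduct_comm, aux_mv,
      Matrix.transpose_transpose]
  have h3 : (Bᵀ * N).mulVec w ⬝ᵥ u = N.mulVec w ⬝ᵥ B.mulVec u := by
    rw [← Matrix.mulVec_mulVec, aux_mv, Matrix.transpose_transpose]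
  have h4 : (Bᵀ * N).mulVec w ⬝ᵥ (R⁻¹ * Bᵀ * N).mulVec w
      = (N * B * R⁻¹ * Bᵀ * N).mulVec w ⬝ᵥ w := by
    rw [aux_mv, Matrix.transpose_mul, hNsymm, Matrix.transpose_transpose,
      Matrix.mulVec_mulVec, dotProduct_comm,
      show N * B * R⁻¹ * Bᵀ * N = N * B * (R⁻¹ * Bᵀ * N) by simp [Matrix.mul_assoc]]
  have h5 : (Aᵀ * N).mulVec w ⬝ᵥ w = N.mulVec w ⬝ᵥ A.mulVec w := by
    rw [← Matrix.mulVec_mulVec, aux_mv, Matrix.transpose_transpose, dotProduct_comm,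
      aux_mv]
  have h6 : (N * A).mulVec w ⬝ᵥ w = N.mulVec w ⬝ᵥ A.mulVec w := by
    rw [← Matrix.mulVec_mulVec, aux_mv, hNsymm, dotProduct_comm]
  have hQw : Q.mulVec w ⬝ᵥ w
      = (N * B * R⁻¹ * Bᵀ * N).mulVec w ⬝ᵥ w - 2 * (N.mulVec w ⬝ᵥ A.mulVec w) := by
    rw [hQeq, Matrix.sub_mulVec, Matrix.sub_mulVec, sub_dotProduct,
      sub_dotProduct, h5, h6]; ring
  rw [Matrix.mulVec_add, add_dotProduct, dotProduct_add, dotProduct_add,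
    h1, h2, h3, h4, hQw, dotProduct_add]
  ring

/-- completion-of-square identity for the backward dynamics and a symmetric
solution of the algebraic Riccati equation. -/
theorem riccati_completion_of_square_backward
    (n m : ℕ) (hn : 1 ≤ n) (hm : 1 ≤ m)
    (A : Matrix (Fin n) (Fin n) ℝ) (B : Matrix (Fin n) (Fin m) ℝ)
    (Q : Matrix (Fin n) (Fin n) ℝ) (hQ : Q.PosDef)
    (R : Matrix (Fin m) (Fin m) ℝ) (hR : R.PosDef)
    (N : Matrix (Fin n) (Fin n) ℝ) (hNsymm : Nᵀ = N)
    (hARE : Aᵀ * N + N * A - N * B * R⁻¹ * Bᵀ * N = -Q)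
    (z : ℝ → Fin n → ℝ) (v : ℝ → Fin m → ℝ)
    (hz : ∀ t ∈ Set.Ici (0 : ℝ),
      HasDerivWithinAt z (-(A.mulVec (z t)) - B.mulVec (v t)) (Set.Ici 0) t)
    (hv : ContinuousOn v (Set.Ici 0))
    (hzlim : Filter.Tendsto z Filter.atTop (nhds 0))
    (hint1 : IntegrableOn
      (fun t => Q.mulVec (z t) ⬝ᵥ z t + R.mulVec (v t) ⬝ᵥ v t) (Set.Ici 0))
    (hint2 : IntegrableOn
      (fun t => R.mulVec (v t + (R⁻¹ * Bᵀ * N).mulVec (z t)) ⬝ᵥ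
        (v t + (R⁻¹ * Bᵀ * N).mulVec (z t))) (Set.Ici 0)) :
    (1 / 2) * ∫ t in Set.Ioi (0 : ℝ), (Q.mulVec (z t) ⬝ᵥ z t + R.mulVec (v t) ⬝ᵥ v t)
      = -(1 / 2) * (N.mulVec (z 0) ⬝ᵥ z 0)
        + (1 / 2) * ∫ t in Set.Ioi (0 : ℝ),
            R.mulVec (v t + (R⁻¹ * Bᵀ * N).mulVec (z t)) ⬝ᵥ
              (v t + (R⁻¹ * Bᵀ * N).mulVec (z t)) := by
  have hRsymm : Rᵀ = R := by
    have := hR.isHermitian.eq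
    simpa using this
  have hRinv : R * R⁻¹ = 1 :=
    Matrix.mul_nonsing_inv R (isUnit_iff_ne_zero.mpr hR.det_pos.ne')
  set f1 : ℝ → ℝ := fun t => Q.mulVec (z t) ⬝ᵥ z t + R.mulVec (v t) ⬝ᵥ v t with hf1
  set f2 : ℝ → ℝ := fun t => R.mulVec (v t + (R⁻¹ * Bᵀ * N).mulVec (z t)) ⬝ᵥ
        (v t + (R⁻¹ * Bᵀ * N).mulVec (z t)) with hf2
  set g : ℝ → ℝ := fun t => N.mulVec (z t) ⬝ᵥ z t with hg
  set G : ℝ → ℝ := fun t => f1 t - f2 t with hG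
  have hId : ∀ t : ℝ,
      N.mulVec (-(A.mulVec (z t)) - B.mulVec (v t)) ⬝ᵥ z t
        + N.mulVec (z t) ⬝ᵥ (-(A.mulVec (z t)) - B.mulVec (v t)) = G t := by
    intro t
    have hflip : N.mulVec (-(A.mulVec (z t)) - B.mulVec (v t)) ⬝ᵥ z t
        = N.mulVec (z t) ⬝ᵥ (-(A.mulVec (z t)) - B.mulVec (v t)) := by
      rw [aux_mv, hNsymm, dotProduct_comm]
    have halg := aux_alg A B Q R hRsymm hRinv N hNsymm hARE (z t) (v t)
    have hdot : N.mulVec (z t) ⬝ᵥ (-(A.mulVec (z t)) - B.mulVec (v t))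
        = -(N.mulVec (z t) ⬝ᵥ (A.mulVec (z t) + B.mulVec (v t))) := by
      rw [dotProduct_sub, dotProduct_neg, dotProduct_add]; ring
    rw [hflip, hdot, hG]
    simp only [hf1, hf2]
    linarith [halg]
  have hgW : ∀ t ∈ Set.Ici (0 : ℝ), HasDerivWithinAt g (G t) (Set.Ici 0) t := by
    intro t ht
    have := aux_deriv N z _ _ _ (hz t ht)
    rw [hId t] at this
    exact this
  have hgD : ∀ t ∈ Set.Ioi (0 : ℝ), HasDerivAt g (G t) t := fun t ht =>
    (hgW t (Set.mem_Ici.mpr (le_of_lt ht))).hasDerivAt (Ici_mem_nhds ht)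
  have hGint : IntegrableOn G (Set.Ioi 0) :=
    (hint1.mono_set Set.Ioi_subset_Ici_self).sub (hint2.mono_set Set.Ioi_subset_Ici_self)
  have hcontF : Continuous (fun w : Fin n → ℝ => N.mulVec w ⬝ᵥ w) := by
    simp only [Matrix.mulVec, dotProduct]
    exact continuous_finset_sum _ fun i _ =>
      (continuous_finset_sum _ fun j _ => (continuous_const.mul (continuous_apply j))).mul
        (continuous_apply i)
  have hgtop : Filter.Tendsto g Filter.atTop (nhds 0) := by
    have := (hcontF.tendsto 0).comp hzlim
    simpa [hg, Function.comp_def] using this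
  have hkey : ∫ t in Set.Ioi (0:ℝ), G t = 0 - g 0 :=
    integral_Ioi_of_hasDerivAt_of_tendsto (hgW 0 Set.self_mem_Ici).continuousWithinAt hgD hGint hgtop
  have hsplit : ∫ t in Set.Ioi (0:ℝ), G t
      = (∫ t in Set.Ioi (0:ℝ), f1 t) - ∫ t in Set.Ioi (0:ℝ), f2 t :=
    integral_sub (hint1.mono_set Set.Ioi_subset_Ici_self)
      (hint2.mono_set Set.Ioi_subset_Ici_self)
  have hg0 : g 0 = N.mulVec (z 0) ⬝ᵥ z 0 := rfl
  rw [hsplit] at hkey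
  linarith [hkey]
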